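/- Class homophily is not tolerant to empty classes: let C ≥ 2 and consider class data on C classes (symmetric nonnegative class adjacency matrix c with row sums a k, class sizes n k > 0, total n) with class homophily h_class^{(C)} = (1/(C−1))·Σ_{k<C} max(c k k / a k − n k / n, 0). Extend the data to C + 1 classes by appending a dummy class with no nodes and no edges (all new matrix entries 0 and n_{C+1} = 0), and let h_class^{(C+1)} denote the class homophily of the extended data, with the convention 0/0 = 0. Then h_class^{(C+1)} = ((C − 1)/C)·h_class^{(C)}; in particular, whenever h_class^{(C)} ≠ 0, introducing the dummy class changes the value of class homophily. -/

import Mathlib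

open Finset

/-- **Class homophily is not tolerant to empty classes.**
Appending a dummy class with no nodes and no edges to class data on `C ≥ 2`
classes rescales class homophily by `(C − 1)/C` (using the convention
`0/0 = 0`, which holds for Lean's real division); in particular, whenever
`h_class ≠ 0`, introducing the dummy class changes its value. -/
theorem class_homophily_not_empty_class_tolerant
    (C : ℕ) (hC : 2 ≤ C) (c : Fin C → Fin C → ℝ) (nsize : Fin C → ℝ)
    (hsymm : ∀ i j, c i j = c j i)
    (hnonneg : ∀ i j, 0 ≤ c i j)
    (hn : ∀ k, 0 < nsize k) :
    let c' : Fin (C + 1) → Fin (C + 1) → ℝ := fun i j =>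
      if h : (i : ℕ) < C ∧ (j : ℕ) < C then c ⟨i.1, h.1⟩ ⟨j.1, h.2⟩ else 0
    let nsize' : Fin (C + 1) → ℝ := fun i =>
      if h : (i : ℕ) < C then nsize ⟨i.1, h⟩ else 0
    let hclassC : ℝ := (1 / ((C : ℝ) - 1)) *
      ∑ k, max (c k k / (∑ j, c k j) - nsize k / (∑ i, nsize i)) 0
    let hclassC1 : ℝ := (1 / (((C + 1 : ℕ) : ℝ) - 1)) *
      ∑ k, max (c' k k / (∑ j, c' k j) - nsize' k / (∑ i, nsize' i)) 0
    hclassC1 = (((C : ℝ) - 1) / (C : ℝ)) * hclassC ∧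
    (hclassC ≠ 0 → hclassC1 ≠ hclassC) := by
  intro c' nsize' hclassC hclassC1
  have hClt : (i : Fin C) → ((i.castSucc : Fin (C+1)) : ℕ) < C := fun i => i.isLt
  have hc'cast : ∀ i j : Fin C, c' i.castSucc j.castSucc = c i j := by
    intro i j
    simp only [c', Fin.coe_castSucc]
    rw [dif_pos ⟨i.isLt, j.isLt⟩]
  have hnsize'cast : ∀ i : Fin C, nsize' i.castSucc = nsize i := by
    intro i
    simp only [nsize', Fin.coe_castSucc]
    rw [dif_pos i.isLt]
  have hlast : ∀ j : Fin (C+1), c' (Fin.last C) j = 0 := by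
    intro j
    simp only [c']
    rw [dif_neg]
    simp [Fin.last]
  have hnlast : nsize' (Fin.last C) = 0 := by
    simp only [nsize']
    rw [dif_neg]
    simp [Fin.last]
  have hrow : ∀ i : Fin C, (∑ j, c' i.castSucc j) = ∑ j, c i j := by
    intro i
    rw [Fin.sum_univ_castSucc]
    have : c' i.castSucc (Fin.last C) = 0 := by
      simp only [c']
      rw [dif_neg]
      simp [Fin.last]
    rw [this, add_zero]
    exact Finset.sum_congr rfl fun j _ => hc'cast i j
  have hnsum : (∑ i, nsize' i) = ∑ i, nsize i := by
    rw [Fin.sum_univ_castSucc, hnlast, add_zero]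
    exact Finset.sum_congr rfl fun i _ => hnsize'cast i
  have hS : (∑ k, max (c' k k / (∑ j, c' k j) - nsize' k / (∑ i, nsize' i)) 0)
      = ∑ k, max (c k k / (∑ j, c k j) - nsize k / (∑ i, nsize i)) 0 := by
    rw [Fin.sum_univ_castSucc]
    have hlast0 : max (c' (Fin.last C) (Fin.last C) / (∑ j, c' (Fin.last C) j)
        - nsize' (Fin.last C) / (∑ i, nsize' i)) 0 = 0 := by
      rw [hlast, hnlast]
      simp
    rw [hlast0, add_zero]
    refine Finset.sum_congr rfl fun i _ => ?_
    rw [hc'cast, hnsize'cast, hrow, hnsum]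
  have hCne : (C : ℝ) - 1 ≠ 0 := by
    have : (2 : ℝ) ≤ (C : ℝ) := by exact_mod_cast hC
    linarith
  have hCne0 : (C : ℝ) ≠ 0 := by
    have : (2 : ℝ) ≤ (C : ℝ) := by exact_mod_cast hC
    linarith
  have key : hclassC1 = (((C : ℝ) - 1) / (C : ℝ)) * hclassC := by
    simp only [hclassC1, hclassC, hS]
    push_cast
    field_simp
    rw [add_sub_cancel_right, mul_div_cancel_left₀ _ hCne0]
  refine ⟨key, fun hne => ?_⟩
  rw [key]
  intro heq
  have : (((C : ℝ) - 1) / (C : ℝ) - 1) * hclassC = 0 := by linarith [heq]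
  rcases mul_eq_zero.mp this with h | h
  · have : ((C : ℝ) - 1) / (C : ℝ) = 1 := by linarith
    have := (div_eq_one_iff_eq hCne0).mp this
    linarith
  · exact hne h
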